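/- In a single cell with two flows having equal packet sizes and PHY rates but symbol error probabilities β₁ < β₂ (both in (0,1/2)), the proportional-fair optimal rate parameters satisfy x₁* < x₂*, i.e., the flow with the better channel gets a higher coding rate and hence strictly less airtime than the flow with the worse channel; in particular the proportional-fair allocation is not an equal-airtime allocation. -/

import Mathlib

/-- Kullback–Leibler divergence `D(B(x) ‖ B(β))` between Bernoulli distributions. -/
noncomputable def binKL (x β : ℝ) : ℝ :=
  x * Real.log (x / β) + (1 - x) * Real.log ((1 - x) / (1 - β))

/-- `Λ_f(x) = ln(x(1-x)/(β_f(1-β_f)))`. -/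
noncomputable def Lam (β x : ℝ) : ℝ := Real.log (x * (1 - x) / (β * (1 - β)))



open Real Set

lemma binKL_self {x : ℝ} (hx0 : 0 < x) (hx1 : x < 1) : binKL x x = 0 := by
  have h1 : x / x = 1 := div_self (ne_of_gt hx0)
  have h2 : (1 - x) / (1 - x) = 1 := div_self (by linarith)
  simp [binKL, h1, h2]

lemma Lam_self {x : ℝ} (hx0 : 0 < x) (hx1 : x < 1) : Lam x x = 0 := by
  have h1 : x * (1 - x) / (x * (1 - x)) = 1 := div_self (by nlinarith)
  simp [Lam, h1]

lemma hasDerivAt_binKL_x {β x : ℝ} (hβ0 : 0 < β) (hβ1 : β < 1) (hx0 : 0 < x) (hx1 : x < 1) :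
    HasDerivAt (fun t => binKL t β) (Real.log (x / β) - Real.log ((1 - x) / (1 - β))) x := by
  have hβ0' : β ≠ 0 := ne_of_gt hβ0
  have h1x : (0:ℝ) < 1 - x := by linarith
  have h1β : (0:ℝ) < 1 - β := by linarith
  have h1 : HasDerivAt (fun t : ℝ => t / β) (1 / β) x := (hasDerivAt_id x).div_const β
  have h2 : HasDerivAt (fun t : ℝ => Real.log (t / β)) (1 / x) x := by
    have := (Real.hasDerivAt_log (by positivity : x / β ≠ 0)).comp x h1
    refine this.congr_deriv (Eq.symm ?_)
    field_simp
  have h3 : HasDerivAt (fun t : ℝ => (1 - t) / (1 - β)) (-1 / (1 - β)) x := by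
    have h : HasDerivAt (fun t : ℝ => 1 - t) (-1) x := by
      simpa using (hasDerivAt_id x).const_sub 1
    simpa using h.div_const (1 - β)
  have hnum : (1 - x) / (1 - β) ≠ 0 := by positivity
  have h4 : HasDerivAt (fun t : ℝ => Real.log ((1 - t) / (1 - β))) (-1 / (1 - x)) x := by
    have := (Real.hasDerivAt_log hnum).comp x h3
    refine this.congr_deriv (Eq.symm ?_)
    field_simp
  have h5 : HasDerivAt (fun t : ℝ => t * Real.log (t / β))
      (1 * Real.log (x / β) + x * (1 / x)) x := (hasDerivAt_id x).mul h2
  have h6 : HasDerivAt (fun t : ℝ => (1 - t) * Real.log ((1 - t) / (1 - β)))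
      ((-1) * Real.log ((1 - x) / (1 - β)) + (1 - x) * (-1 / (1 - x))) x := by
    have h : HasDerivAt (fun t : ℝ => 1 - t) (-1) x := by
      simpa using (hasDerivAt_id x).const_sub 1
    exact h.mul h4
  have := h5.add h6
  refine this.congr_deriv (Eq.symm ?_)
  field_simp
  ring

lemma hasDerivAt_binKL_beta {β x : ℝ} (hβ0 : 0 < β) (hβ1 : β < 1) (hx0 : 0 < x) (hx1 : x < 1) :
    HasDerivAt (fun b => binKL x b) ((β - x) / (β * (1 - β))) β := by
  have hβ0' : β ≠ 0 := ne_of_gt hβ0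
  have h1x : (0:ℝ) < 1 - x := by linarith
  have h1β : (0:ℝ) < 1 - β := by linarith
  have h1 : HasDerivAt (fun b : ℝ => x / b) ((0 * β - x * 1) / β ^ 2) β :=
    (hasDerivAt_const β x).div (hasDerivAt_id β) hβ0'
  have h2 : HasDerivAt (fun b : ℝ => Real.log (x / b)) (-1 / β) β := by
    have := (Real.hasDerivAt_log (by positivity : x / β ≠ 0)).comp β h1
    refine this.congr_deriv (Eq.symm ?_)
    field_simp
    ring
  have h1b : HasDerivAt (fun b : ℝ => 1 - b) (-1) β := by
    simpa using (hasDerivAt_id β).const_sub 1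
  have h3 : HasDerivAt (fun b : ℝ => (1 - x) / (1 - b))
      ((0 * (1 - β) - (1 - x) * (-1)) / (1 - β) ^ 2) β :=
    (hasDerivAt_const β (1 - x)).div h1b (ne_of_gt h1β)
  have h4 : HasDerivAt (fun b : ℝ => Real.log ((1 - x) / (1 - b))) (1 / (1 - β)) β := by
    have := (Real.hasDerivAt_log (by positivity : (1 - x) / (1 - β) ≠ 0)).comp β h3
    refine this.congr_deriv (Eq.symm ?_)
    field_simp
    ring
  have h5 := (h2.const_mul x).add (h4.const_mul (1 - x))
  have heq : (fun b => binKL x b) = fun b =>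
      x * Real.log (x / b) + (1 - x) * Real.log ((1 - x) / (1 - b)) := by
    funext b; rfl
  rw [heq]
  refine h5.congr_deriv (Eq.symm ?_)
  field_simp
  ring

lemma hasDerivAt_Lam_x {β x : ℝ} (hβ0 : 0 < β) (hβ1 : β < 1) (hx0 : 0 < x) (hx1 : x < 1) :
    HasDerivAt (fun t => Lam β t) ((1 - 2 * x) / (x * (1 - x))) x := by
  have h1x : (0:ℝ) < 1 - x := by linarith
  have h1β : (0:ℝ) < 1 - β := by linarith
  have hc : β * (1 - β) ≠ 0 := by positivity
  have h1 : HasDerivAt (fun t : ℝ => t * (1 - t)) (1 * (1 - x) + x * (-1)) x := by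
    have h1b : HasDerivAt (fun t : ℝ => 1 - t) (-1) x := by
      simpa using (hasDerivAt_id x).const_sub 1
    exact (hasDerivAt_id x).mul h1b
  have h2 : HasDerivAt (fun t : ℝ => t * (1 - t) / (β * (1 - β)))
      ((1 * (1 - x) + x * (-1)) / (β * (1 - β))) x := h1.div_const _
  have := (Real.hasDerivAt_log (by positivity : x * (1 - x) / (β * (1 - β)) ≠ 0)).comp x h2
  refine this.congr_deriv (Eq.symm ?_)
  field_simp
  ring

lemma hasDerivAt_Lam_beta {β x : ℝ} (hβ0 : 0 < β) (hβ1 : β < 1) (hx0 : 0 < x) (hx1 : x < 1) :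
    HasDerivAt (fun b => Lam b x) (-(1 - 2 * β) / (β * (1 - β))) β := by
  have h1x : (0:ℝ) < 1 - x := by linarith
  have h1β : (0:ℝ) < 1 - β := by linarith
  have h1b : HasDerivAt (fun b : ℝ => 1 - b) (-1) β := by
    simpa using (hasDerivAt_id β).const_sub 1
  have h1 : HasDerivAt (fun b : ℝ => b * (1 - b)) (1 * (1 - β) + β * (-1)) β :=
    (hasDerivAt_id β).mul h1b
  have h2 : HasDerivAt (fun b : ℝ => x * (1 - x) / (b * (1 - b)))
      ((0 * (β * (1 - β)) - x * (1 - x) * (1 * (1 - β) + β * (-1))) / (β * (1 - β)) ^ 2) β :=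
    (hasDerivAt_const β (x * (1 - x))).div h1 (by positivity)
  have := (Real.hasDerivAt_log (by positivity : x * (1 - x) / (β * (1 - β)) ≠ 0)).comp β h2
  have heq : (fun b => Lam b x) = fun b => Real.log (x * (1 - x) / (b * (1 - b))) := by
    funext b; rfl
  rw [heq]
  refine this.congr_deriv (Eq.symm ?_)
  field_simp
  ring

lemma binKL_pos {β x : ℝ} (hβ0 : 0 < β) (hβx : β < x) (hx1 : x < 1) : 0 < binKL x β := by
  have hβ1 : β < 1 := hβx.trans hx1
  have hmono : StrictMonoOn (fun t => binKL t β) (Icc β x) := by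
    apply strictMonoOn_of_deriv_pos (convex_Icc β x)
    · intro t ht
      exact (hasDerivAt_binKL_x hβ0 hβ1 (lt_of_lt_of_le hβ0 ht.1)
        (lt_of_le_of_lt ht.2 hx1)).continuousAt.continuousWithinAt
    · intro t ht
      rw [interior_Icc] at ht
      have ht0 : 0 < t := hβ0.trans ht.1
      have ht1 : t < 1 := ht.2.trans hx1
      rw [(hasDerivAt_binKL_x hβ0 hβ1 ht0 ht1).deriv]
      have h1 : 0 < Real.log (t / β) := Real.log_pos (by rw [lt_div_iff₀ hβ0]; linarith [ht.1])
      have h2 : Real.log ((1 - t) / (1 - β)) < 0 := by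
        apply Real.log_neg
        · apply div_pos <;> linarith
        · rw [div_lt_one (by linarith)]; linarith [ht.1]
      linarith
  have := hmono (left_mem_Icc.2 hβx.le) (right_mem_Icc.2 hβx.le) hβx
  simpa [binKL_self hβ0 hβ1] using this

lemma binKL_anti {β₁ β₂ x : ℝ} (h0 : 0 < β₁) (h12 : β₁ < β₂) (h2x : β₂ < x) (hx1 : x < 1) :
    binKL x β₂ < binKL x β₁ := by
  have hx0 : 0 < x := by linarith
  have hanti : StrictAntiOn (fun b => binKL x b) (Icc β₁ β₂) := by
    apply strictAntiOn_of_deriv_neg (convex_Icc β₁ β₂)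
    · intro b hb
      exact (hasDerivAt_binKL_beta (lt_of_lt_of_le h0 hb.1) (by linarith [hb.2] : b < 1)
        hx0 hx1).continuousAt.continuousWithinAt
    · intro b hb
      rw [interior_Icc] at hb
      have hb0 : 0 < b := h0.trans hb.1
      have hb1 : b < 1 := by linarith [hb.2]
      rw [(hasDerivAt_binKL_beta hb0 hb1 hx0 hx1).deriv]
      apply div_neg_of_neg_of_pos
      · linarith [hb.2]
      · nlinarith
  exact hanti (left_mem_Icc.2 h12.le) (right_mem_Icc.2 h12.le) h12

lemma Lam_pos {β x : ℝ} (hβ0 : 0 < β) (hβx : β < x) (hxh : x < 1 / 2) : 0 < Lam β x := by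
  apply Real.log_pos
  rw [lt_div_iff₀ (by nlinarith : (0:ℝ) < β * (1 - β))]
  nlinarith

lemma Lam_nonneg {β x : ℝ} (hβ0 : 0 < β) (hβx : β ≤ x) (hxh : x ≤ 1 / 2) : 0 ≤ Lam β x := by
  rcases eq_or_lt_of_le hβx with h | h
  · subst h; rw [Lam_self hβ0 (by linarith)]
  rcases eq_or_lt_of_le hxh with h2 | h2
  · apply le_of_lt; apply Real.log_pos
    rw [lt_div_iff₀ (by nlinarith : (0:ℝ) < β * (1 - β))]
    nlinarith
  · exact (Lam_pos hβ0 h h2).le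

lemma Lam_anti {β₁ β₂ x : ℝ} (h0 : 0 < β₁) (h12 : β₁ < β₂) (h2h : β₂ < 1 / 2)
    (hx0 : 0 < x) (hx1 : x < 1) : Lam β₂ x < Lam β₁ x := by
  have h1 : (0:ℝ) < β₁ * (1 - β₁) := by nlinarith
  have h2 : (0:ℝ) < β₂ * (1 - β₂) := by nlinarith
  have hxx : (0:ℝ) < x * (1 - x) := by nlinarith
  apply Real.log_lt_log (by positivity)
  apply div_lt_div_of_pos_left hxx h1
  nlinarith

lemma key2 {β₁ β₂ x : ℝ} (h0 : 0 < β₁) (h12 : β₁ < β₂) (h2x : β₂ < x) (hxh : x < 1 / 2) :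
    binKL x β₂ * Lam β₁ x < binKL x β₁ * Lam β₂ x := by
  have hx0 : (0:ℝ) < x := by linarith
  have hx1 : x < 1 := by linarith
  have hΛ₂ : 0 < Lam β₂ x := Lam_pos (by linarith) h2x hxh
  have hD₂ : 0 < binKL x β₂ := binKL_pos (by linarith) h2x hx1
  set r := binKL x β₂ / Lam β₂ x with hr_def
  have hr : 0 < r := div_pos hD₂ hΛ₂
  have hrΛ : r * Lam β₂ x = binKL x β₂ := div_mul_cancel₀ _ (ne_of_gt hΛ₂)
  set u : ℝ → ℝ := fun b => binKL x b - r * Lam b x with hu_def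
  have hder : ∀ b : ℝ, 0 < b → b < 1 →
      HasDerivAt u ((b - x) / (b * (1 - b)) - r * (-(1 - 2 * b) / (b * (1 - b)))) b := by
    intro b hb0 hb1
    exact (hasDerivAt_binKL_beta hb0 hb1 hx0 hx1).sub
      ((hasDerivAt_Lam_beta hb0 hb1 hx0 hx1).const_mul r)
  have huβ₂ : u β₂ = 0 := by simp [hu_def, hrΛ]
  have hux : u x = 0 := by simp [hu_def, binKL_self hx0 hx1, Lam_self hx0 hx1]
  -- s b := (b - x) + r * (1 - 2*b)
  have hsx : 0 < (x - x) + r * (1 - 2 * x) := by nlinarith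
  have hsβ₂ : (β₂ - x) + r * (1 - 2 * β₂) < 0 := by
    by_contra hcon
    push_neg at hcon
    have hmono : StrictMonoOn u (Icc β₂ x) := by
      apply strictMonoOn_of_deriv_pos (convex_Icc β₂ x)
      · intro t ht
        exact (hder t (by linarith [ht.1]) (by linarith [ht.2])).continuousAt.continuousWithinAt
      · intro t ht
        rw [interior_Icc] at ht
        have ht0 : 0 < t := by linarith [ht.1]
        have ht1 : t < 1 := by linarith [ht.2]
        rw [(hder t ht0 ht1).deriv]
        have hst : 0 < (t - x) + r * (1 - 2 * t) := by nlinarith [ht.1, ht.2]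
        have : (t - x) / (t * (1 - t)) - r * (-(1 - 2 * t) / (t * (1 - t)))
            = ((t - x) + r * (1 - 2 * t)) / (t * (1 - t)) := by
          field_simp; ring
        rw [this]
        apply div_pos hst
        nlinarith
    have := hmono (left_mem_Icc.2 h2x.le) (right_mem_Icc.2 h2x.le) h2x
    rw [huβ₂, hux] at this
    exact lt_irrefl 0 this
  have h2r : 0 < 1 - 2 * r := by nlinarith
  have hanti : StrictAntiOn u (Icc β₁ β₂) := by
    apply strictAntiOn_of_deriv_neg (convex_Icc β₁ β₂)
    · intro t ht
      exact (hder t (by linarith [ht.1]) (by linarith [ht.2])).continuousAt.continuousWithinAt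
    · intro t ht
      rw [interior_Icc] at ht
      have ht0 : 0 < t := by linarith [ht.1]
      have ht1 : t < 1 := by linarith [ht.2]
      rw [(hder t ht0 ht1).deriv]
      have hst : (t - x) + r * (1 - 2 * t) < 0 := by nlinarith [ht.1, ht.2]
      have heq : (t - x) / (t * (1 - t)) - r * (-(1 - 2 * t) / (t * (1 - t)))
          = ((t - x) + r * (1 - 2 * t)) / (t * (1 - t)) := by
        field_simp; ring
      rw [heq]
      apply div_neg_of_neg_of_pos hst
      nlinarith
  have hu1 : 0 < u β₁ := by
    have := hanti (left_mem_Icc.2 h12.le) (right_mem_Icc.2 h12.le) h12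
    rw [huβ₂] at this; exact this
  have hu1' : r * Lam β₁ x < binKL x β₁ := by
    simp only [hu_def] at hu1; linarith
  have e : binKL x β₂ * Lam β₁ x = r * Lam β₁ x * Lam β₂ x := by
    rw [← hrΛ]; ring
  linarith [mul_lt_mul_of_pos_right hu1' hΛ₂, e.le, e.ge]

lemma log_concave_ratio {lam L1 L2 : ℝ} (hlam : 0 < lam) (h2 : 0 < L2) (h12 : L2 < L1) :
    L2 * (Real.log (lam + L1) - Real.log lam) < L1 * (Real.log (lam + L2) - Real.log lam) := by
  have hL1 : 0 < L1 := h2.trans h12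
  have hcc := strictConcaveOn_log_Ioi
  have ha : 0 < L2 / L1 := div_pos h2 hL1
  have hb : 0 < 1 - L2 / L1 := by
    rw [sub_pos, div_lt_one hL1]; exact h12
  have hmem1 : lam + L1 ∈ Ioi (0:ℝ) := by simp; linarith
  have hmem2 : lam ∈ Ioi (0:ℝ) := hlam
  have hne : lam + L1 ≠ lam := by linarith
  have key := hcc.2 hmem1 hmem2 hne ha hb (by ring)
  have harg : (L2 / L1) • (lam + L1) + (1 - L2 / L1) • lam = lam + L2 := by
    simp only [smul_eq_mul]; field_simp; ring
  rw [harg] at key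
  simp only [smul_eq_mul] at key
  have hexp : L1 * (L2 / L1 * Real.log (lam + L1) + (1 - L2 / L1) * Real.log lam)
      = L2 * Real.log (lam + L1) + (L1 - L2) * Real.log lam := by
    field_simp
    try ring
  have h5 := mul_lt_mul_of_pos_left key hL1
  rw [hexp] at h5
  nlinarith [h5]

noncomputable def Pfun (β t : ℝ) : ℝ :=
  (Real.log (t / β) - Real.log ((1 - t) / (1 - β))) * (1 - 2 * t) + 2 * binKL t β

lemma hasDerivAt_Dp {β t : ℝ} (hβ0 : 0 < β) (hβ1 : β < 1) (ht0 : 0 < t) (ht1 : t < 1) :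
    HasDerivAt (fun s => Real.log (s / β) - Real.log ((1 - s) / (1 - β)))
      (1 / t + 1 / (1 - t)) t := by
  have h1t : (0:ℝ) < 1 - t := by linarith
  have h1β : (0:ℝ) < 1 - β := by linarith
  have h1 : HasDerivAt (fun s : ℝ => s / β) (1 / β) t := (hasDerivAt_id t).div_const β
  have h2 : HasDerivAt (fun s : ℝ => Real.log (s / β)) (1 / t) t := by
    have := (Real.hasDerivAt_log (by positivity : t / β ≠ 0)).comp t h1
    refine this.congr_deriv (Eq.symm ?_)
    field_simp
  have h3 : HasDerivAt (fun s : ℝ => (1 - s) / (1 - β)) (-1 / (1 - β)) t := by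
    have h : HasDerivAt (fun s : ℝ => 1 - s) (-1) t := by
      simpa using (hasDerivAt_id t).const_sub 1
    simpa using h.div_const (1 - β)
  have h4 : HasDerivAt (fun s : ℝ => Real.log ((1 - s) / (1 - β))) (-1 / (1 - t)) t := by
    have := (Real.hasDerivAt_log (by positivity : (1 - t) / (1 - β) ≠ 0)).comp t h3
    refine this.congr_deriv (Eq.symm ?_)
    field_simp
  have := h2.sub h4
  refine this.congr_deriv (Eq.symm ?_)
  ring

lemma hasDerivAt_P {β t : ℝ} (hβ0 : 0 < β) (hβ1 : β < 1) (ht0 : 0 < t) (ht1 : t < 1) :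
    HasDerivAt (fun s => Pfun β s) ((1 - 2 * t) / (t * (1 - t))) t := by
  have h1t : (0:ℝ) < 1 - t := by linarith
  have hlin : HasDerivAt (fun s : ℝ => 1 - 2 * s) (-2) t := by
    simpa using ((hasDerivAt_id t).const_mul 2).const_sub 1
  have h1 := (hasDerivAt_Dp hβ0 hβ1 ht0 ht1).mul hlin
  have h2 := (hasDerivAt_binKL_x hβ0 hβ1 ht0 ht1).const_mul 2
  have := h1.add h2
  have heq : (fun s => Pfun β s) = fun s =>
      (Real.log (s / β) - Real.log ((1 - s) / (1 - β))) * (1 - 2 * s) + 2 * binKL s β := by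
    funext s; rfl
  rw [heq]
  refine this.congr_deriv (Eq.symm ?_)
  field_simp
  ring

lemma P_self {β : ℝ} (hβ0 : 0 < β) (hβ1 : β < 1) : Pfun β β = 0 := by
  have h1 : β / β = 1 := div_self (ne_of_gt hβ0)
  have h2 : (1 - β) / (1 - β) = 1 := div_self (by linarith)
  simp [Pfun, h1, h2, binKL_self hβ0 hβ1]

lemma P_pos {β t : ℝ} (hβ0 : 0 < β) (hβh : β < 1 / 2) (ht : t ∈ Ioo β (1 / 2)) :
    0 < Pfun β t := by
  have hβ1 : β < 1 := by linarith
  have hmono : StrictMonoOn (fun s => Pfun β s) (Icc β (1 / 2)) := by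
    apply strictMonoOn_of_deriv_pos (convex_Icc β (1 / 2))
    · intro s hs
      exact (hasDerivAt_P hβ0 hβ1 (by linarith [hs.1]) (by linarith [hs.2])
        ).continuousAt.continuousWithinAt
    · intro s hs
      rw [interior_Icc] at hs
      rw [(hasDerivAt_P hβ0 hβ1 (by linarith [hs.1]) (by linarith [hs.2])).deriv]
      apply div_pos (by linarith [hs.2])
      nlinarith [hs.1, hs.2]
  have h := hmono (left_mem_Icc.2 (by linarith)) ⟨ht.1.le, ht.2.le⟩ ht.1
  simp only at h
  rw [P_self hβ0 hβ1] at h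
  exact h

lemma P_lt {β p q : ℝ} (hβ0 : 0 < β) (hβh : β < 1 / 2) (hp : p ∈ Ioo β (1 / 2))
    (hq : q ∈ Ioo β (1 / 2)) (hpq : p < q) : Pfun β p < Pfun β q := by
  have hβ1 : β < 1 := by linarith
  have hmono : StrictMonoOn (fun s => Pfun β s) (Icc β (1 / 2)) := by
    apply strictMonoOn_of_deriv_pos (convex_Icc β (1 / 2))
    · intro s hs
      exact (hasDerivAt_P hβ0 hβ1 (by linarith [hs.1]) (by linarith [hs.2])
        ).continuousAt.continuousWithinAt
    · intro s hs
      rw [interior_Icc] at hs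
      rw [(hasDerivAt_P hβ0 hβ1 (by linarith [hs.1]) (by linarith [hs.2])).deriv]
      apply div_pos (by linarith [hs.2])
      nlinarith [hs.1, hs.2]
  exact hmono ⟨hp.1.le, hp.2.le⟩ ⟨hq.1.le, hq.2.le⟩ hpq

lemma hasDerivAt_M {β lam t : ℝ} (hβ0 : 0 < β) (hβ1 : β < 1) (ht0 : 0 < t) (ht1 : t < 1)
    (hpos : 0 < lam + Lam β t) :
    HasDerivAt (fun s => Real.log (lam + Lam β s) - Real.log lam)
      ((1 - 2 * t) / (t * (1 - t) * (lam + Lam β t))) t := by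
  have h1 := (hasDerivAt_Lam_x hβ0 hβ1 ht0 ht1).const_add lam
  have h2 := (Real.hasDerivAt_log (ne_of_gt hpos)).comp t h1
  have := h2.sub_const (Real.log lam)
  refine this.congr_deriv (Eq.symm ?_)
  have h1t : (0:ℝ) < 1 - t := by linarith
  rw [inv_mul_eq_div, div_div]

lemma hasDerivAt_N {β k t : ℝ} (hβ0 : 0 < β) (hβ1 : β < 1) (ht0 : 0 < t) (hth : t < 1 / 2) :
    HasDerivAt (fun s => k * binKL s β / (1 - 2 * s)) (k * Pfun β t / (1 - 2 * t) ^ 2) t := by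
  have ht1 : t < 1 := by linarith
  have h2t : (0:ℝ) < 1 - 2 * t := by linarith
  have hlin : HasDerivAt (fun s : ℝ => 1 - 2 * s) (-2) t := by
    simpa using ((hasDerivAt_id t).const_mul 2).const_sub 1
  have h1 := ((hasDerivAt_binKL_x hβ0 hβ1 ht0 ht1).const_mul k).div hlin (ne_of_gt h2t)
  refine h1.congr_deriv (Eq.symm ?_)
  simp only [Pfun]
  field_simp
  ring

/-- Lam is monotone in x on (0,1/2) -- directly from log monotonicity. -/
lemma Lam_lt_Lam {β p q : ℝ} (hβ0 : 0 < β) (hβ1 : β < 1) (hp0 : 0 < p) (hpq : p < q)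
    (hq : q < 1 / 2) : Lam β p < Lam β q := by
  have hc : (0:ℝ) < β * (1 - β) := by nlinarith
  apply Real.log_lt_log (div_pos (by nlinarith) hc)
  apply div_lt_div_of_pos_right ?_ hc
  nlinarith

set_option maxHeartbeats 1000000 in
lemma ratio_mono {β k lam p q : ℝ} (hβ0 : 0 < β) (hβh : β < 1 / 2) (hk : 0 < k)
    (hlam : 0 < lam) (hp : p ∈ Ioo β (1 / 2)) (hq : q ∈ Ioo β (1 / 2)) (hpq : p < q) :
    (k * binKL p β / (1 - 2 * p)) * (Real.log (lam + Lam β q) - Real.log lam)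
      < (k * binKL q β / (1 - 2 * q)) * (Real.log (lam + Lam β p) - Real.log lam) := by
  have hβ1 : β < 1 := by linarith
  set N : ℝ → ℝ := fun s => k * binKL s β / (1 - 2 * s) with hN
  set M : ℝ → ℝ := fun s => Real.log (lam + Lam β s) - Real.log lam with hM
  set N' : ℝ → ℝ := fun t => k * Pfun β t / (1 - 2 * t) ^ 2 with hN'
  set M' : ℝ → ℝ := fun t => (1 - 2 * t) / (t * (1 - t) * (lam + Lam β t)) with hM'
  have hLpos : ∀ t ∈ Icc β (1 / 2), 0 < lam + Lam β t := fun t ht => by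
    linarith [Lam_nonneg hβ0 ht.1 ht.2]
  have hMd : ∀ t ∈ Icc β (1/2), HasDerivAt M (M' t) t := fun t ht =>
    hasDerivAt_M hβ0 hβ1 (by linarith [ht.1]) (by linarith [ht.2]) (hLpos t ht)
  have hNd : ∀ t ∈ Ioo β (1/2) ∪ {β}, HasDerivAt N (N' t) t := by
    intro t ht
    rcases ht with ht | ht
    · exact hasDerivAt_N hβ0 hβ1 (by linarith [ht.1]) ht.2
    · simp only [mem_singleton_iff] at ht
      subst ht
      exact hasDerivAt_N hβ0 hβ1 hβ0 hβh
  -- positivity of derivatives on the open interval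
  have hN'pos : ∀ t ∈ Ioo β (1/2), 0 < N' t := fun t ht => by
    have := P_pos hβ0 hβh ht
    have h2t : (0:ℝ) < 1 - 2 * t := by linarith [ht.2]
    simp only [hN']
    positivity
  have hM'pos : ∀ t ∈ Ioo β (1/2), 0 < M' t := fun t ht => by
    have h2t : (0:ℝ) < 1 - 2 * t := by linarith [ht.2]
    have ht0 : 0 < t := by linarith [ht.1]
    have ht1 : (0:ℝ) < 1 - t := by linarith [ht.2]
    have := hLpos t ⟨ht.1.le, ht.2.le⟩
    simp only [hM']
    positivity
  have hMβ : M β = 0 := by simp [hM, Lam_self hβ0 (by linarith)]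
  have hNβ : N β = 0 := by simp [hN, binKL_self hβ0 (by linarith)]
  -- M values
  have hMp : 0 < M p := by
    simp only [hM]
    have := Lam_pos hβ0 hp.1 hp.2
    have : lam < lam + Lam β p := by linarith
    have := Real.log_lt_log hlam this
    linarith
  have hMpq : M p < M q := by
    have hmono : StrictMonoOn M (Icc β (1/2)) := by
      apply strictMonoOn_of_deriv_pos (convex_Icc _ _)
      · exact fun t ht => (hMd t ht).continuousAt.continuousWithinAt
      · intro t ht
        rw [interior_Icc] at ht
        rw [(hMd t ⟨ht.1.le, ht.2.le⟩).deriv]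
        exact hM'pos t ht
    exact hmono ⟨hp.1.le, hp.2.le⟩ ⟨hq.1.le, hq.2.le⟩ hpq
  -- continuity of N on Icc β q
  have hNc : ContinuousOn N (Icc β q) := by
    intro t ht
    rcases eq_or_lt_of_le ht.1 with h | h
    · exact (hNd t (Or.inr (by simp [← h]))).continuousAt.continuousWithinAt
    · exact (hNd t (Or.inl ⟨h, lt_of_le_of_lt ht.2 hq.2⟩)).continuousAt.continuousWithinAt
  have hMc : ContinuousOn M (Icc β (1/2)) :=
    fun t ht => (hMd t ht).continuousAt.continuousWithinAt
  -- Cauchy MVT on [β, p]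
  obtain ⟨η, hη, hMVT1⟩ := exists_ratio_hasDerivAt_eq_ratio_slope N N' hp.1
    (hNc.mono (Icc_subset_Icc le_rfl (hpq.le)))
    (fun t ht => hNd t (Or.inl ⟨ht.1, ht.2.trans hp.2⟩)) M M'
    (hMc.mono (Icc_subset_Icc le_rfl hp.2.le))
    (fun t ht => hMd t ⟨ht.1.le, (ht.2.trans hp.2).le⟩)
  rw [hMβ, hNβ, sub_zero, sub_zero] at hMVT1
  -- Cauchy MVT on [p, q]
  obtain ⟨ξ, hξ, hMVT2⟩ := exists_ratio_hasDerivAt_eq_ratio_slope N N' hpq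
    (hNc.mono (Icc_subset_Icc hp.1.le le_rfl))
    (fun t ht => hNd t (Or.inl ⟨hp.1.trans ht.1, ht.2.trans hq.2⟩)) M M'
    (hMc.mono (Icc_subset_Icc hp.1.le hq.2.le))
    (fun t ht => hMd t ⟨(hp.1.trans ht.1).le, (ht.2.trans hq.2).le⟩)
  have hηI : η ∈ Ioo β (1/2) := ⟨hη.1, hη.2.trans hp.2⟩
  have hξI : ξ ∈ Ioo β (1/2) := ⟨hp.1.trans hξ.1, hξ.2.trans hq.2⟩
  -- Q-monotonicity: N' η * M' ξ < N' ξ * M' η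
  have hQ : N' η * M' ξ < N' ξ * M' η := by
    have hη0 : 0 < η := by linarith [hηI.1]
    have hη1 : (0:ℝ) < 1 - η := by linarith [hηI.2]
    have hη2 : (0:ℝ) < 1 - 2 * η := by linarith [hηI.2]
    have hξ0 : 0 < ξ := by linarith [hξI.1]
    have hξ1 : (0:ℝ) < 1 - ξ := by linarith [hξI.2]
    have hξ2 : (0:ℝ) < 1 - 2 * ξ := by linarith [hξI.2]
    have hLη := hLpos η ⟨hηI.1.le, hηI.2.le⟩
    have hLξ := hLpos ξ ⟨hξI.1.le, hξI.2.le⟩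
    have hPη := P_pos hβ0 hβh hηI
    have hPξ := P_lt hβ0 hβh hηI hξI (hη.2.trans hξ.1)
    have hLL : Lam β η < Lam β ξ := Lam_lt_Lam hβ0 hβ1 hη0 (hη.2.trans hξ.1) hξI.2
    have hxx : η * (1 - η) < ξ * (1 - ξ) := by nlinarith [hη.2.trans hξ.1]
    have h3 : (1 - 2 * ξ)^3 < (1 - 2 * η)^3 :=
      pow_lt_pow_left₀ (by linarith [hη.2.trans hξ.1]) hξ2.le (by norm_num)
    have key : k * Pfun β η * (1 - 2 * ξ)^3 * (η * (1 - η)) * (lam + Lam β η)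
        < k * Pfun β ξ * (1 - 2 * η)^3 * (ξ * (1 - ξ)) * (lam + Lam β ξ) := by
      have s1 : k * Pfun β η * (1 - 2 * ξ)^3 * (η * (1 - η)) * (lam + Lam β η)
          < k * Pfun β ξ * (1 - 2 * ξ)^3 * (η * (1 - η)) * (lam + Lam β η) := by
        nlinarith [mul_pos (mul_pos (mul_pos (mul_pos hk (sub_pos.2 hPξ)) (pow_pos hξ2 3))
          (mul_pos hη0 hη1)) hLη]
      have s2 : k * Pfun β ξ * (1 - 2 * ξ)^3 * (η * (1 - η)) * (lam + Lam β η)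
          ≤ k * Pfun β ξ * (1 - 2 * η)^3 * (η * (1 - η)) * (lam + Lam β η) := by
        have hkP : 0 < k * Pfun β ξ := mul_pos hk (by linarith)
        nlinarith [mul_nonneg (mul_nonneg (mul_nonneg hkP.le (sub_nonneg.2 h3.le))
          (mul_pos hη0 hη1).le) hLη.le]
      have s3 : k * Pfun β ξ * (1 - 2 * η)^3 * (η * (1 - η)) * (lam + Lam β η)
          < k * Pfun β ξ * (1 - 2 * η)^3 * (ξ * (1 - ξ)) * (lam + Lam β ξ) := by
        have hkP : 0 < k * Pfun β ξ * (1 - 2 * η)^3 :=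
          mul_pos (mul_pos hk (by linarith)) (pow_pos hη2 3)
        have hmul : η * (1 - η) * (lam + Lam β η) < ξ * (1 - ξ) * (lam + Lam β ξ) :=
          mul_lt_mul'' hxx (by linarith) (mul_pos hη0 hη1).le hLη.le
        nlinarith [mul_lt_mul_of_pos_left hmul hkP]
      linarith
    -- convert key to the N'/M' form
    simp only [hN', hM']
    rw [div_mul_div_comm, div_mul_div_comm, div_lt_div_iff₀ (by positivity) (by positivity)]
    linear_combination key
  -- combine everything
  have hM'η := hM'pos η hηI
  have hM'ξ := hM'pos ξ hξI
  have hNp : N p = M p * (N' η / M' η) := by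
    rw [← mul_div_assoc, eq_div_iff (ne_of_gt hM'η)]
    linarith [hMVT1]
  have hNq : N q - N p = (M q - M p) * (N' ξ / M' ξ) := by
    rw [← mul_div_assoc, eq_div_iff (ne_of_gt hM'ξ)]
    linarith [hMVT2]
  have hAB : N' η / M' η < N' ξ / M' ξ := by
    rw [div_lt_div_iff₀ hM'η hM'ξ]
    exact hQ
  have hNq' : N q = M p * (N' η / M' η) + (M q - M p) * (N' ξ / M' ξ) := by
    linarith [hNp, hNq]
  have hgoal : N p * M q < N q * M p := by
    rw [hNp, hNq']
    nlinarith [mul_lt_mul_of_pos_left hAB (mul_pos hMp (sub_pos.2 hMpq))]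
  exact hgoal

set_option maxHeartbeats 2000000 in
/-- In a single cell with two flows having equal packet sizes `k` and PHY rates `w` but
symbol error probabilities `β₁ < β₂` (both in `(0,1/2)`), the proportional-fair optimal
rate parameters — the solutions `x_f* ∈ (β_f, 1/2)` of
`(k/(1-2x)) D(B(x)‖B(β_f)) = ln((λ + Λ_f(x))/λ)` with a common `λ > 0` — satisfy
`x₁* < x₂*`: the flow with the better channel gets a higher coding rate
(`1 - 2x₂* < 1 - 2x₁*`) and strictly less airtime
(`k/((1-2x₁*)w) < k/((1-2x₂*)w)`) than the flow with the worse channel; in particular the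
proportional-fair allocation is not an equal-airtime allocation. -/
theorem better_channel_gets_less_airtime (β₁ β₂ k lam w x₁ x₂ : ℝ)
    (hβ₁0 : 0 < β₁) (hβ : β₁ < β₂) (hβ₂ : β₂ < 1 / 2)
    (hk : 0 < k) (hlam : 0 < lam) (hw : 0 < w)
    (hx₁ : x₁ ∈ Set.Ioo β₁ (1 / 2))
    (hx₂ : x₂ ∈ Set.Ioo β₂ (1 / 2))
    (heq₁ : k / (1 - 2 * x₁) * binKL x₁ β₁ = Real.log ((lam + Lam β₁ x₁) / lam))
    (heq₂ : k / (1 - 2 * x₂) * binKL x₂ β₂ = Real.log ((lam + Lam β₂ x₂) / lam)) :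
    x₁ < x₂ ∧ 1 - 2 * x₂ < 1 - 2 * x₁ ∧
      k / ((1 - 2 * x₁) * w) < k / ((1 - 2 * x₂) * w) := by
  obtain ⟨hx₁β, hx₁h⟩ := hx₁
  obtain ⟨hx₂β, hx₂h⟩ := hx₂
  have hβ₂0 : 0 < β₂ := hβ₁0.trans hβ
  have hx₁1 : x₁ < 1 := by linarith
  have hx₂1 : x₂ < 1 := by linarith
  have hx₁0 : 0 < x₁ := hβ₁0.trans hx₁β
  have hx₂0 : 0 < x₂ := hβ₂0.trans hx₂β
  have hΛ₂' : 0 < Lam β₂ x₂ := Lam_pos hβ₂0 hx₂β hx₂h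
  have hlam1 : lam ≠ 0 := ne_of_gt hlam
  have hL2x2 : Real.log ((lam + Lam β₂ x₂) / lam)
      = Real.log (lam + Lam β₂ x₂) - Real.log lam :=
    Real.log_div (by linarith) hlam1
  have hL2x2pos : 0 < Real.log (lam + Lam β₂ x₂) - Real.log lam := by
    have := Real.log_lt_log hlam (by linarith : lam < lam + Lam β₂ x₂)
    linarith
  have hN₂ : k * binKL x₂ β₂ / (1 - 2 * x₂)
      = Real.log (lam + Lam β₂ x₂) - Real.log lam := by
    rw [← hL2x2, ← heq₂]; ring
  have hx12 : x₁ < x₂ := by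
    by_cases hcase : x₁ ≤ β₂
    · linarith
    push_neg at hcase
    -- main case: β₂ < x₁ < 1/2
    have hD₁ : 0 < binKL x₁ β₁ := binKL_pos hβ₁0 hx₁β hx₁1
    have hD₂ : 0 < binKL x₁ β₂ := binKL_pos hβ₂0 hcase hx₁1
    have hΛ₁ : 0 < Lam β₁ x₁ := Lam_pos hβ₁0 hx₁β hx₁h
    have hΛ₂ : 0 < Lam β₂ x₁ := Lam_pos hβ₂0 hcase hx₁h
    have hΛ12 : Lam β₂ x₁ < Lam β₁ x₁ := Lam_anti hβ₁0 hβ hβ₂ hx₁0 hx₁1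
    have hkey : binKL x₁ β₂ * Lam β₁ x₁ < binKL x₁ β₁ * Lam β₂ x₁ :=
      key2 hβ₁0 hβ hcase hx₁h
    have hlog := log_concave_ratio hlam hΛ₂ hΛ12
    set L₁' := Real.log (lam + Lam β₁ x₁) - Real.log lam with hL₁'def
    set L₂' := Real.log (lam + Lam β₂ x₁) - Real.log lam with hL₂'def
    have hL₁'pos : 0 < L₁' := by
      have := Real.log_lt_log hlam (by linarith : lam < lam + Lam β₁ x₁)
      simp only [hL₁'def]; linarith
    have hL₂'pos : 0 < L₂' := by
      have := Real.log_lt_log hlam (by linarith : lam < lam + Lam β₂ x₁)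
      simp only [hL₂'def]; linarith
    have hDlog : binKL x₁ β₂ * L₁' < binKL x₁ β₁ * L₂' := by
      have t1 := mul_lt_mul_of_pos_right hkey hL₁'pos
      have t2 := mul_lt_mul_of_pos_left hlog hD₁
      have t3 : Lam β₁ x₁ * (binKL x₁ β₂ * L₁') < Lam β₁ x₁ * (binKL x₁ β₁ * L₂') := by
        nlinarith [t1, t2]
      exact lt_of_mul_lt_mul_left t3 hΛ₁.le
    have h2x₁ : (0:ℝ) < 1 - 2 * x₁ := by linarith
    have hkd : k / (1 - 2 * x₁) * binKL x₁ β₁ = L₁' := by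
      rw [heq₁, hL₁'def, Real.log_div (by linarith) hlam1]
    have hN₁ : k * binKL x₁ β₂ / (1 - 2 * x₁) < L₂' := by
      have e : k * binKL x₁ β₂ / (1 - 2 * x₁) * binKL x₁ β₁ = L₁' * binKL x₁ β₂ := by
        rw [← hkd]; ring
      have e2 : k * binKL x₁ β₂ / (1 - 2 * x₁) = L₁' * binKL x₁ β₂ / binKL x₁ β₁ :=
        (eq_div_iff (ne_of_gt hD₁)).2 e
      rw [e2, div_lt_iff₀ hD₁]
      nlinarith [hDlog]
    -- now conclude x₁ < x₂
    by_contra hcon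
    push_neg at hcon
    rcases eq_or_lt_of_le hcon with heq | hlt
    · rw [heq] at hN₂
      rw [hN₂] at hN₁
      exact lt_irrefl _ hN₁
    · have hrm := ratio_mono hβ₂0 hβ₂ hk hlam ⟨hx₂β, hx₂h⟩ ⟨hcase, hx₁h⟩ hlt
      rw [hN₂] at hrm
      nlinarith [mul_lt_mul_of_pos_right hN₁ hL2x2pos, hrm, hL2x2pos]
  refine ⟨hx12, by linarith, ?_⟩
  have h2 : (0:ℝ) < (1 - 2 * x₂) * w := mul_pos (by linarith) hw
  have h3 : (1 - 2 * x₂) * w < (1 - 2 * x₁) * w :=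
    mul_lt_mul_of_pos_right (by linarith) hw
  exact div_lt_div_of_pos_left hk h2 h3
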